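/- As n → ∞, sqrt(n)·P(d_n(i,j) = ⌈sqrt(n)⌉) converges to e^(-1/4)/2, where P(d_n(i,j)=m) = ((n-2)!/(2n-4)!)·(2^(m-1)(m-1)(2n-m-4)!/(n-m-1)!). -/

import Mathlib

open Filter
open Finset

/-- The probability that two fixed distinct leaves of a uniformly random
unrooted binary phylogenetic tree on `[n]` are at path distance `m`:
`P(d_n(i,j)=m) = ((n-2)!/(2n-4)!) · 2^(m-1)(m-1)(2n-m-4)!/(n-m-1)!`. -/
noncomputable def probDist (n m : ℕ) : ℝ :=
  ((Nat.factorial (n - 2) : ℝ) / (Nat.factorial (2 * n - 4))) *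
    (2 ^ (m - 1) * ((m : ℝ) - 1) * (Nat.factorial (2 * n - m - 4)) /
      (Nat.factorial (n - m - 1)))

lemma sum_range_cast (k : ℕ) : (∑ j ∈ Finset.range k, (j:ℝ)) = k*(k-1)/2 := by
  induction k with
  | zero => simp
  | succ k ih => rw [Finset.sum_range_succ, ih]; push_cast; ring

lemma term_upper (a j : ℝ) (h0 : 0 ≤ j) (hja : 2*j ≤ a) (ha : 0 < a) :
    (a - 2*j)/(a - j) ≤ Real.exp (-(j/a)) := by
  have haj : 0 < a - j := by nlinarith
  have h1 : (a - 2*j)/(a - j) ≤ (a - j)/a := by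
    rw [div_le_div_iff₀ haj ha]; nlinarith
  have h2 : (a - j)/a ≤ Real.exp (-(j/a)) := by
    have := Real.add_one_le_exp (-(j/a))
    have : 1 - j/a ≤ Real.exp (-(j/a)) := by linarith
    calc (a-j)/a = 1 - j/a := by field_simp
    _ ≤ _ := this
  linarith

lemma term_lower (a j c : ℝ) (h0 : 0 ≤ j) (hc : 0 < c) (hca : c ≤ a - 2*j) :
    Real.exp (-(j/c)) ≤ (a - 2*j)/(a - j) := by
  have h2j : 0 < a - 2*j := lt_of_lt_of_le hc hca
  have haj : 0 < a - j := by nlinarith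
  have step1 : Real.exp (-(j/(a-2*j))) ≤ (a-2*j)/(a-j) := by
    have he : 1 + j/(a-2*j) ≤ Real.exp (j/(a-2*j)) := by
      have := Real.add_one_le_exp (j/(a-2*j)); linarith
    have heq : 1 + j/(a-2*j) = (a-j)/(a-2*j) := by
      rw [eq_div_iff (ne_of_gt h2j), add_mul, div_mul_cancel₀ _ (ne_of_gt h2j)]; ring
    rw [Real.exp_neg]
    rw [inv_le_comm₀ (Real.exp_pos _) (by positivity)]
    calc (( a - 2*j)/(a-j))⁻¹ = (a-j)/(a-2*j) := by
          rw [inv_div]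
    _ ≤ _ := by rw [← heq]; exact he
  refine le_trans ?_ step1
  apply Real.exp_le_exp.2
  have : j/(a-2*j) ≤ j/c := by
    apply div_le_div_of_nonneg_left h0 hc hca
  linarith

lemma probDist_eq (n mm : ℕ) (hm2 : 2 ≤ mm) (h1 : mm - 1 ≤ n - 2) (h2 : mm ≤ 2*n - 4) :
    probDist n mm = (((mm:ℝ) - 1) * ∏ j ∈ Finset.range (mm-1), ((2*n-4-2*j : ℕ):ℝ)) /
      ∏ k ∈ Finset.range mm, ((2*n-4-k:ℕ):ℝ) := by
  have hf1 : Nat.factorial (n - 2 - (mm-1)) * (n-2).descFactorial (mm-1) = Nat.factorial (n-2) :=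
    Nat.factorial_mul_descFactorial h1
  have hf2 : Nat.factorial (2*n - 4 - mm) * (2*n-4).descFactorial mm = Nat.factorial (2*n-4) :=
    Nat.factorial_mul_descFactorial h2
  have e1 : n - 2 - (mm - 1) = n - mm - 1 := by omega
  have e2 : 2*n - 4 - mm = 2*n - mm - 4 := by omega
  rw [e1] at hf1; rw [e2] at hf2
  have hprod1 : (2:ℝ)^(mm-1) * ((n-2).descFactorial (mm-1) : ℝ) =
      ∏ j ∈ Finset.range (mm-1), ((2*n-4-2*j : ℕ):ℝ) := by
    rw [Nat.descFactorial_eq_prod_range, Nat.cast_prod]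
    rw [show (2:ℝ)^(mm-1) = ∏ _i ∈ Finset.range (mm-1), (2:ℝ) by
      rw [Finset.prod_const, Finset.card_range], ← Finset.prod_mul_distrib]
    apply Finset.prod_congr rfl
    intro j _
    have : 2*n-4-2*j = 2 * (n - 2 - j) := by omega
    rw [this]; push_cast; ring
  have hprod2 : ((2*n-4).descFactorial mm : ℝ) = ∏ k ∈ Finset.range mm, ((2*n-4-k:ℕ):ℝ) := by
    rw [Nat.descFactorial_eq_prod_range, Nat.cast_prod]
  rw [probDist, ← hf1, ← hf2, ← hprod1, ← hprod2]
  have p1 : (0:ℝ) < Nat.factorial (n - mm - 1) := by exact_mod_cast Nat.factorial_pos _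
  have p2 : (0:ℝ) < Nat.factorial (2*n - mm - 4) := by exact_mod_cast Nat.factorial_pos _
  have p3 : (0:ℝ) < ((2*n-4).descFactorial mm : ℝ) := by
    have : (2*n-4).descFactorial mm ≠ 0 := by
      rw [Ne, Nat.descFactorial_eq_zero_iff_lt]; omega
    exact_mod_cast Nat.pos_of_ne_zero this
  push_cast
  field_simp

set_option maxHeartbeats 1000000 in
lemma main_ineq (n : ℕ) (hn : 100 ≤ n) :
    (Real.sqrt n * ((⌈Real.sqrt n⌉₊:ℝ)-1) / (2*(n:ℝ) - ⌈Real.sqrt n⌉₊ - 3)) *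
      Real.exp (-(((⌈Real.sqrt n⌉₊:ℝ)-1)*((⌈Real.sqrt n⌉₊:ℝ)-2) /
        (2*(2*(n:ℝ)-4-2*(⌈Real.sqrt n⌉₊:ℝ)))))
      ≤ Real.sqrt n * probDist n ⌈Real.sqrt n⌉₊ ∧
    Real.sqrt n * probDist n ⌈Real.sqrt n⌉₊ ≤
      (Real.sqrt n * ((⌈Real.sqrt n⌉₊:ℝ)-1) / (2*(n:ℝ) - ⌈Real.sqrt n⌉₊ - 3)) *
      Real.exp (-(((⌈Real.sqrt n⌉₊:ℝ)-1)*((⌈Real.sqrt n⌉₊:ℝ)-2) / (2*(2*(n:ℝ)-4)))) := by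
  set s : ℝ := Real.sqrt n with hs
  set mm : ℕ := ⌈s⌉₊ with hmm
  have hN : (100:ℝ) ≤ (n:ℝ) := by exact_mod_cast hn
  have hs0 : 0 ≤ s := Real.sqrt_nonneg _
  have hs2 : s * s = (n:ℝ) := Real.mul_self_sqrt (by positivity)
  have hs10 : 10 ≤ s := by nlinarith
  have hmlb : s ≤ (mm:ℝ) := Nat.le_ceil _
  have hmub : (mm:ℝ) ≤ s + 1 := le_of_lt (Nat.ceil_lt_add_one hs0)
  have h4m : (4*mm:ℝ) ≤ (n:ℝ) := by push_cast; nlinarith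
  have h4mn : 4*mm ≤ n := by exact_mod_cast h4m
  have hm10 : 10 ≤ mm := by
    have : (10:ℝ) ≤ (mm:ℝ) := le_trans hs10 hmlb
    exact_mod_cast this
  have hm2 : 2 ≤ mm := by omega
  have h1 : mm - 1 ≤ n - 2 := by omega
  have h2 : mm ≤ 2*n - 4 := by omega
  rw [probDist_eq n mm hm2 h1 h2]
  -- cast equalities
  have hcast_last : ((2*n-4-(mm-1):ℕ):ℝ) = 2*(n:ℝ) - mm - 3 := by
    rw [show 2*n-4-(mm-1) = 2*n - (mm+3) by omega, Nat.cast_sub (by omega)]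
    push_cast; ring
  have hsplit : (∏ k ∈ Finset.range mm, ((2*n-4-k:ℕ):ℝ)) =
      (∏ k ∈ Finset.range (mm-1), ((2*n-4-k:ℕ):ℝ)) * ((2*n-4-(mm-1):ℕ):ℝ) := by
    conv_lhs => rw [show mm = (mm-1)+1 by omega]
    rw [Finset.prod_range_succ]
  have hDpos : ∀ k ∈ Finset.range (mm-1), (0:ℝ) < ((2*n-4-k:ℕ):ℝ) := by
    intro k hk
    rw [Finset.mem_range] at hk
    have : 0 < 2*n-4-k := by omega
    exact_mod_cast this
  have hprodpos : 0 < ∏ k ∈ Finset.range (mm-1), ((2*n-4-k:ℕ):ℝ) :=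
    Finset.prod_pos hDpos
  have hlastpos : (0:ℝ) < 2*(n:ℝ) - mm - 3 := by nlinarith
  have key : s * ((((mm:ℝ)-1) * ∏ j ∈ Finset.range (mm-1), ((2*n-4-2*j:ℕ):ℝ)) /
        ∏ k ∈ Finset.range mm, ((2*n-4-k:ℕ):ℝ))
      = (s * ((mm:ℝ)-1)/(2*(n:ℝ)-mm-3)) *
        ∏ j ∈ Finset.range (mm-1), (((2*n-4-2*j:ℕ):ℝ)/((2*n-4-j:ℕ):ℝ)) := by
    rw [hsplit, hcast_last, Finset.prod_div_distrib]
    have h3 := ne_of_gt hprodpos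
    have h4 := ne_of_gt hlastpos
    field_simp
  rw [key]
  -- termwise cast facts
  have hcastnum : ∀ j ∈ Finset.range (mm-1), ((2*n-4-2*j:ℕ):ℝ) = 2*(n:ℝ)-4-2*(j:ℝ) := by
    intro j hj
    rw [Finset.mem_range] at hj
    rw [show 2*n-4-2*j = 2*n - (4+2*j) by omega, Nat.cast_sub (by omega)]
    push_cast; ring
  have hcastden : ∀ j ∈ Finset.range (mm-1), ((2*n-4-j:ℕ):ℝ) = 2*(n:ℝ)-4-(j:ℝ) := by
    intro j hj
    rw [Finset.mem_range] at hj
    rw [show 2*n-4-j = 2*n - (4+j) by omega, Nat.cast_sub (by omega)]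
    push_cast; ring
  have hApos : 0 ≤ s * ((mm:ℝ)-1)/(2*(n:ℝ)-mm-3) := by
    apply div_nonneg _ (le_of_lt hlastpos)
    have : (1:ℝ) ≤ (mm:ℝ) := by exact_mod_cast (by omega : 1 ≤ mm)
    nlinarith
  have hcU : (0:ℝ) < 2*(n:ℝ)-4-2*(mm:ℝ) := by nlinarith
  -- upper bound on the ratio product
  have hRupper : (∏ j ∈ Finset.range (mm-1), (((2*n-4-2*j:ℕ):ℝ)/((2*n-4-j:ℕ):ℝ)))
      ≤ Real.exp (-(((mm:ℝ)-1)*((mm:ℝ)-2) / (2*(2*(n:ℝ)-4)))) := by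
    have step : (∏ j ∈ Finset.range (mm-1), (((2*n-4-2*j:ℕ):ℝ)/((2*n-4-j:ℕ):ℝ)))
        ≤ ∏ j ∈ Finset.range (mm-1), Real.exp (-((j:ℝ)/(2*(n:ℝ)-4))) := by
      apply Finset.prod_le_prod
      · intro j hj
        exact div_nonneg (by positivity) (by positivity)
      · intro j hj
        rw [hcastnum j hj, hcastden j hj]
        have hjm : j < mm - 1 := Finset.mem_range.1 hj
        apply term_upper
        · positivity
        · have : (j:ℝ) ≤ (mm:ℝ) := by exact_mod_cast (by omega : j ≤ mm)
          nlinarith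
        · nlinarith
    refine le_trans step (le_of_eq ?_)
    rw [← Real.exp_sum]
    congr 1
    have hsum : ∑ x ∈ Finset.range (mm-1), -((x:ℝ)/(2*(n:ℝ)-4)) =
        -((∑ x ∈ Finset.range (mm-1), (x:ℝ))/(2*(n:ℝ)-4)) := by
      rw [Finset.sum_div, ← Finset.sum_neg_distrib]
    rw [hsum, sum_range_cast, Nat.cast_sub (by omega : 1 ≤ mm)]
    push_cast
    rw [neg_inj, div_eq_div_iff (by nlinarith) (by nlinarith)]
    ring
  -- lower bound on the ratio product
  have hRlower : Real.exp (-(((mm:ℝ)-1)*((mm:ℝ)-2) / (2*(2*(n:ℝ)-4-2*(mm:ℝ)))))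
      ≤ (∏ j ∈ Finset.range (mm-1), (((2*n-4-2*j:ℕ):ℝ)/((2*n-4-j:ℕ):ℝ))) := by
    have step : (∏ j ∈ Finset.range (mm-1), Real.exp (-((j:ℝ)/(2*(n:ℝ)-4-2*(mm:ℝ)))))
        ≤ ∏ j ∈ Finset.range (mm-1), (((2*n-4-2*j:ℕ):ℝ)/((2*n-4-j:ℕ):ℝ)) := by
      apply Finset.prod_le_prod
      · intro j hj; positivity
      · intro j hj
        rw [hcastnum j hj, hcastden j hj]
        have hjm : j < mm - 1 := Finset.mem_range.1 hj
        have hjr : (j:ℝ) ≤ (mm:ℝ) := by exact_mod_cast (by omega : j ≤ mm)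
        apply term_lower
        · positivity
        · exact hcU
        · nlinarith
    refine le_trans (le_of_eq ?_) step
    rw [← Real.exp_sum]
    congr 1
    have hsum : ∑ x ∈ Finset.range (mm-1), -((x:ℝ)/(2*(n:ℝ)-4-2*(mm:ℝ))) =
        -((∑ x ∈ Finset.range (mm-1), (x:ℝ))/(2*(n:ℝ)-4-2*(mm:ℝ))) := by
      rw [Finset.sum_div, ← Finset.sum_neg_distrib]
    rw [sum_range_cast, Nat.cast_sub (by omega : 1 ≤ mm)] at hsum
    rw [hsum]
    push_cast
    rw [neg_inj, div_eq_div_iff (by nlinarith) (by nlinarith)]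
    ring
  exact ⟨mul_le_mul_of_nonneg_left hRlower hApos,
    mul_le_mul_of_nonneg_left hRupper hApos⟩

lemma sqrt_facts (n : ℕ) (hn : 100 ≤ n) :
    0 < Real.sqrt n ∧ Real.sqrt n * Real.sqrt n = (n:ℝ) ∧
    Real.sqrt n ≤ (⌈Real.sqrt n⌉₊:ℝ) ∧ (⌈Real.sqrt n⌉₊:ℝ) ≤ Real.sqrt n + 1 ∧
    0 < 2*(n:ℝ) - (⌈Real.sqrt n⌉₊:ℝ) - 3 ∧ 0 < 2*(n:ℝ) - 4 - 2*(⌈Real.sqrt n⌉₊:ℝ) ∧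
    (0:ℝ) < (n:ℝ) := by
  have hN : (100:ℝ) ≤ (n:ℝ) := by exact_mod_cast hn
  have hs0 : 0 ≤ Real.sqrt n := Real.sqrt_nonneg _
  have hs2 : Real.sqrt n * Real.sqrt n = (n:ℝ) := Real.mul_self_sqrt (by positivity)
  have hs10 : 10 ≤ Real.sqrt n := by nlinarith
  have hmlb : Real.sqrt n ≤ (⌈Real.sqrt n⌉₊:ℝ) := Nat.le_ceil _
  have hmub : (⌈Real.sqrt n⌉₊:ℝ) ≤ Real.sqrt n + 1 := le_of_lt (Nat.ceil_lt_add_one hs0)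
  refine ⟨by linarith, hs2, hmlb, hmub, by nlinarith, by nlinarith, by linarith⟩

lemma sqrt_tendsto : Tendsto (fun n : ℕ => Real.sqrt n) atTop atTop := by
  apply tendsto_atTop_atTop.2
  intro b
  refine ⟨⌈b^2⌉₊, fun n hn => ?_⟩
  have h1 : (b^2:ℝ) ≤ n := le_trans (Nat.le_ceil _) (by exact_mod_cast hn)
  calc b ≤ |b| := le_abs_self b
  _ = Real.sqrt (b^2) := (Real.sqrt_sq_eq_abs b).symm
  _ ≤ Real.sqrt n := Real.sqrt_le_sqrt h1


lemma alg1 (M s nn : ℝ) (hs0 : 0 < s) (hs2 : s * s = nn) (hl : 0 < 2*nn - M - 3)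
    (hn0 : 0 < nn) :
    ((M-1)/s)/(2 - M/nn - 3/nn) = s*(M-1)/(2*nn-M-3) := by
  have hne1 : s ≠ 0 := ne_of_gt hs0
  have hne3 : nn ≠ 0 := ne_of_gt hn0
  have hd : 2 - M/nn - 3/nn = (2*nn-M-3)/nn := by field_simp; try ring
  rw [hd, div_div_eq_mul_div]
  congr 1
  rw [← hs2]
  field_simp

lemma alg2 (M s nn : ℝ) (hs0 : 0 < s) (hs2 : s * s = nn) (hn0 : 0 < nn) :
    ((M-1)/s)*((M-2)/s)/(2*(2 - 4/nn)) = (M-1)*(M-2)/(2*(2*nn-4)) := by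
  have hne1 : s ≠ 0 := ne_of_gt hs0
  have hne3 : nn ≠ 0 := ne_of_gt hn0
  have hd : 2*(2 - 4/nn) = (2*(2*nn-4))/nn := by field_simp; try ring
  rw [hd, div_div_eq_mul_div]
  congr 1
  rw [← hs2]
  field_simp

lemma alg3 (M s nn : ℝ) (hs0 : 0 < s) (hs2 : s * s = nn) (hn0 : 0 < nn) :
    ((M-1)/s)*((M-2)/s)/(2*(2 - 4/nn - 2*(M/nn))) = (M-1)*(M-2)/(2*(2*nn-4-2*M)) := by
  have hne1 : s ≠ 0 := ne_of_gt hs0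
  have hne3 : nn ≠ 0 := ne_of_gt hn0
  have hd : 2*(2 - 4/nn - 2*(M/nn)) = (2*(2*nn-4-2*M))/nn := by field_simp; try ring
  rw [hd, div_div_eq_mul_div]
  congr 1
  rw [← hs2]
  field_simp

/-- As `n → ∞`, `√n · P(d_n(i,j) = ⌈√n⌉)` converges to `e^(-1/4)/2`. -/
theorem sqrt_mul_probDist_tendsto :
    Tendsto (fun n : ℕ => Real.sqrt n * probDist n ⌈Real.sqrt n⌉₊) atTop
      (nhds (Real.exp (-(1 / 4 : ℝ)) / 2)) := by
  have hinvs : Tendsto (fun n : ℕ => 1/Real.sqrt n) atTop (nhds 0) := by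
    have h : Tendsto (fun n : ℕ => (Real.sqrt n)⁻¹) atTop (nhds 0) :=
      sqrt_tendsto.inv_tendsto_atTop
    simp only [one_div]; exact h
  have hinvn : Tendsto (fun n : ℕ => 1/(n:ℝ)) atTop (nhds 0) :=
    tendsto_one_div_atTop_nhds_zero_nat
  -- m/√n → 1
  have hms : Tendsto (fun n : ℕ => (⌈Real.sqrt n⌉₊:ℝ)/Real.sqrt n) atTop (nhds 1) := by
    have hup : Tendsto (fun n : ℕ => 1 + 1/Real.sqrt n) atTop (nhds 1) := by
      have h := (tendsto_const_nhds (x := (1:ℝ)) (f := atTop (α := ℕ))).add hinvs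
      simpa using h
    apply tendsto_of_tendsto_of_tendsto_of_le_of_le' tendsto_const_nhds hup
    · filter_upwards [eventually_ge_atTop 100] with n hn
      obtain ⟨hs0, hs2, hmlb, hmub, -, -, -⟩ := sqrt_facts n hn
      rw [le_div_iff₀ hs0]; linarith
    · filter_upwards [eventually_ge_atTop 100] with n hn
      obtain ⟨hs0, hs2, hmlb, hmub, -, -, -⟩ := sqrt_facts n hn
      rw [div_le_iff₀ hs0]
      have he : (1 + 1/Real.sqrt n) * Real.sqrt n = Real.sqrt n + 1 := by
        field_simp
      rw [he]; linarith
  -- m/n → 0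
  have hmn : Tendsto (fun n : ℕ => (⌈Real.sqrt n⌉₊:ℝ)/(n:ℝ)) atTop (nhds 0) := by
    have h := hms.mul hinvs
    rw [mul_zero] at h
    apply h.congr'
    filter_upwards [eventually_ge_atTop 100] with n hn
    obtain ⟨hs0, hs2, -, -, -, -, hn0⟩ := sqrt_facts n hn
    rw [div_mul_div_comm, mul_one, hs2]
  -- (m-1)/√n → 1 and (m-2)/√n → 1
  have ht1 : Tendsto (fun n : ℕ => ((⌈Real.sqrt n⌉₊:ℝ)-1)/Real.sqrt n) atTop (nhds 1) := by
    have h := hms.sub hinvs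
    rw [sub_zero] at h
    exact h.congr (fun n => (sub_div _ _ _).symm)
  have h2s : Tendsto (fun n : ℕ => 2/Real.sqrt n) atTop (nhds 0) := by
    have h := hinvs.const_mul (2:ℝ)
    rw [mul_zero] at h
    refine h.congr (fun n => ?_); rw [mul_one_div]
  have ht2 : Tendsto (fun n : ℕ => ((⌈Real.sqrt n⌉₊:ℝ)-2)/Real.sqrt n) atTop (nhds 1) := by
    have h := hms.sub h2s
    rw [sub_zero] at h
    exact h.congr (fun n => (sub_div _ _ _).symm)
  -- 3/n → 0, 4/n → 0
  have h3n : Tendsto (fun n : ℕ => 3/(n:ℝ)) atTop (nhds 0) := by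
    have h := hinvn.const_mul (3:ℝ)
    rw [mul_zero] at h
    refine h.congr (fun n => ?_); rw [mul_one_div]
  have h4n : Tendsto (fun n : ℕ => 4/(n:ℝ)) atTop (nhds 0) := by
    have h := hinvn.const_mul (4:ℝ)
    rw [mul_zero] at h
    refine h.congr (fun n => ?_); rw [mul_one_div]
  -- A → 1/2
  have hA : Tendsto (fun n : ℕ => Real.sqrt n * ((⌈Real.sqrt n⌉₊:ℝ)-1) /
      (2*(n:ℝ) - (⌈Real.sqrt n⌉₊:ℝ) - 3)) atTop (nhds (1/2)) := by
    have hden : Tendsto (fun n : ℕ => 2 - (⌈Real.sqrt n⌉₊:ℝ)/(n:ℝ) - 3/(n:ℝ)) atTop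
        (nhds 2) := by
      have h := ((tendsto_const_nhds (x := (2:ℝ)) (f := atTop (α := ℕ))).sub hmn).sub h3n
      simpa using h
    have h := ht1.div hden (by norm_num)
    apply h.congr'
    filter_upwards [eventually_ge_atTop 100] with n hn
    obtain ⟨hs0, hs2, -, -, hl, -, hn0⟩ := sqrt_facts n hn
    have hne1 : Real.sqrt n ≠ 0 := ne_of_gt hs0
    have hne3 : (n:ℝ) ≠ 0 := ne_of_gt hn0
    simp only [Pi.div_apply]
    exact alg1 _ _ _ hs0 hs2 hl hn0
  -- L → 1/4
  have hL : Tendsto (fun n : ℕ => ((⌈Real.sqrt n⌉₊:ℝ)-1)*((⌈Real.sqrt n⌉₊:ℝ)-2) /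
      (2*(2*(n:ℝ)-4))) atTop (nhds (1/4)) := by
    have hden : Tendsto (fun n : ℕ => 2*(2 - 4/(n:ℝ))) atTop (nhds 4) := by
      have h := ((tendsto_const_nhds (x := (2:ℝ)) (f := atTop (α := ℕ))).sub h4n).const_mul (2:ℝ)
      norm_num at h
      exact h
    have h := (ht1.mul ht2).div hden (by norm_num)
    norm_num at h
    apply h.congr'
    filter_upwards [eventually_ge_atTop 100] with n hn
    obtain ⟨hs0, hs2, -, -, -, -, hn0⟩ := sqrt_facts n hn
    have hne1 : Real.sqrt n ≠ 0 := ne_of_gt hs0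
    have hne3 : (n:ℝ) ≠ 0 := ne_of_gt hn0
    simp only [Pi.div_apply]
    exact alg2 _ _ _ hs0 hs2 hn0
  -- U → 1/4
  have hU : Tendsto (fun n : ℕ => ((⌈Real.sqrt n⌉₊:ℝ)-1)*((⌈Real.sqrt n⌉₊:ℝ)-2) /
      (2*(2*(n:ℝ)-4-2*(⌈Real.sqrt n⌉₊:ℝ)))) atTop (nhds (1/4)) := by
    have hden : Tendsto (fun n : ℕ =>
        2*(2 - 4/(n:ℝ) - 2*((⌈Real.sqrt n⌉₊:ℝ)/(n:ℝ)))) atTop (nhds 4) := by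
      have h := (((tendsto_const_nhds (x := (2:ℝ)) (f := atTop (α := ℕ))).sub h4n).sub
        (hmn.const_mul (2:ℝ))).const_mul (2:ℝ)
      norm_num at h
      exact h
    have h := (ht1.mul ht2).div hden (by norm_num)
    norm_num at h
    apply h.congr'
    filter_upwards [eventually_ge_atTop 100] with n hn
    obtain ⟨hs0, hs2, -, -, -, -, hn0⟩ := sqrt_facts n hn
    have hne1 : Real.sqrt n ≠ 0 := ne_of_gt hs0
    have hne3 : (n:ℝ) ≠ 0 := ne_of_gt hn0
    simp only [Pi.div_apply]
    exact alg3 _ _ _ hs0 hs2 hn0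
  -- combine with exp
  have hexpU : Tendsto (fun n : ℕ => Real.exp (-(((⌈Real.sqrt n⌉₊:ℝ)-1)*((⌈Real.sqrt n⌉₊:ℝ)-2) /
      (2*(2*(n:ℝ)-4-2*(⌈Real.sqrt n⌉₊:ℝ)))))) atTop (nhds (Real.exp (-(1/4:ℝ)))) :=
    (Real.continuous_exp.tendsto _).comp hU.neg
  have hexpL : Tendsto (fun n : ℕ => Real.exp (-(((⌈Real.sqrt n⌉₊:ℝ)-1)*((⌈Real.sqrt n⌉₊:ℝ)-2) /
      (2*(2*(n:ℝ)-4))))) atTop (nhds (Real.exp (-(1/4:ℝ)))) :=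
    (Real.continuous_exp.tendsto _).comp hL.neg
  have hgl := hA.mul hexpU
  have hgh := hA.mul hexpL
  rw [show (1/2:ℝ) * Real.exp (-(1/4:ℝ)) = Real.exp (-(1/4:ℝ))/2 by ring] at hgl hgh
  apply tendsto_of_tendsto_of_tendsto_of_le_of_le' hgl hgh
  · filter_upwards [eventually_ge_atTop 100] with n hn
    exact (main_ineq n hn).1
  · filter_upwards [eventually_ge_atTop 100] with n hn
    exact (main_ineq n hn).2
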